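/- Let X be a finite set with |X| ≥ 2. A cluster system C for X is a hierarchy if and only if its adjoint C* is ample (in which case C* is an ample saturated patchwork containing C_triv). Conversely, if C is an ample weak patchwork containing C_triv, then its adjoint C* is a hierarchy, and its double adjoint C** is an ample saturated patchwork containing C_triv. -/

import Mathlib

/-- Two subsets `A`, `B` are compatible if `A ∩ B ∈ {∅, A, B}`. -/
def Compatible {α : Type*} [DecidableEq α] (A B : Finset α) : Prop :=
  A ∩ B = ∅ ∨ A ∩ B = A ∨ A ∩ B = B

/-- A cluster system: a collection of non-empty subsets of `X`. -/
def IsCS {α : Type*} [DecidableEq α] (C : Set (Finset α)) : Prop :=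
  ∀ A ∈ C, A.Nonempty

/-- The adjoint `C*`: all non-empty subsets of `X` compatible with every member of `C`. -/
def adjS {α : Type*} [DecidableEq α] (C : Set (Finset α)) : Set (Finset α) :=
  {A | A.Nonempty ∧ ∀ B ∈ C, Compatible A B}

/-- A hierarchy: a cluster system whose members are pairwise compatible. -/
def IsHierarchyS {α : Type*} [DecidableEq α] (C : Set (Finset α)) : Prop :=
  IsCS C ∧ ∀ A ∈ C, ∀ B ∈ C, Compatible A B

/-- A maximal hierarchy: a hierarchy not properly contained in any other hierarchy. -/
def IsMaxHierarchyS {α : Type*} [DecidableEq α] (H : Set (Finset α)) : Prop :=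
  IsHierarchyS H ∧ ∀ D : Set (Finset α), IsHierarchyS D → H ⊆ D → D = H

/-- A weak patchwork: incompatible members have their union in the system. -/
def IsWeakPW {α : Type*} [DecidableEq α] (C : Set (Finset α)) : Prop :=
  ∀ A ∈ C, ∀ B ∈ C, ¬Compatible A B → A ∪ B ∈ C

/-- A patchwork: incompatible members have both intersection and union in the system. -/
def IsPW {α : Type*} [DecidableEq α] (C : Set (Finset α)) : Prop :=
  ∀ A ∈ C, ∀ B ∈ C, ¬Compatible A B → A ∩ B ∈ C ∧ A ∪ B ∈ C

/-- A saturated patchwork: for incompatible members `A`, `B`, the five sets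
`A ∩ B`, `A ∪ B`, `A - B`, `B - A`, `(A ∪ B) - (A ∩ B)` lie in the system. -/
def IsSatPW {α : Type*} [DecidableEq α] (C : Set (Finset α)) : Prop :=
  ∀ A ∈ C, ∀ B ∈ C, ¬Compatible A B →
    A ∩ B ∈ C ∧ A ∪ B ∈ C ∧ A \ B ∈ C ∧ B \ A ∈ C ∧ (A ∪ B) \ (A ∩ B) ∈ C

/-- The trivial cluster system: all singletons together with `X` itself. -/
def CtrivS (α : Type*) [Fintype α] [DecidableEq α] : Set (Finset α) :=
  {A | (∃ x : α, A = {x}) ∨ A = Finset.univ}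

/-- `C` is ample: for every arc `(C₂, C₁)` of the Hasse diagram (i.e. `C₂ ⊊ C₁`
with nothing of `C` strictly between), `C₁ - C₂ ∈ C`. -/
def IsAmpleS {α : Type*} [DecidableEq α] (C : Set (Finset α)) : Prop :=
  ∀ C₁ ∈ C, ∀ C₂ ∈ C, C₂ ⊂ C₁ → (∀ B ∈ C, ¬(C₂ ⊂ B ∧ B ⊂ C₁)) → C₁ \ C₂ ∈ C

section Aux

variable {α : Type*} [DecidableEq α]

lemma compat_symm {A B : Finset α} (h : Compatible A B) : Compatible B A := by
  unfold Compatible at *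
  rw [Finset.inter_comm]
  tauto

lemma compat_iff {A B : Finset α} :
    Compatible A B ↔ (∀ x ∈ A, x ∉ B) ∨ B ⊆ A ∨ A ⊆ B := by
  unfold Compatible
  rw [Finset.inter_eq_left, Finset.inter_eq_right, Finset.eq_empty_iff_forall_notMem]
  simp only [Finset.mem_inter, not_and]
  tauto

lemma compat_of_disj {A B : Finset α} (h : ∀ x ∈ A, x ∉ B) : Compatible A B :=
  compat_iff.mpr (Or.inl h)

lemma compat_of_sub {A B : Finset α} (h : A ⊆ B) : Compatible A B :=
  compat_iff.mpr (Or.inr (Or.inr h))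

lemma compat_of_sup {A B : Finset α} (h : B ⊆ A) : Compatible A B :=
  compat_iff.mpr (Or.inr (Or.inl h))

lemma not_compat_witness {A B : Finset α} (h : ¬Compatible A B) :
    (∃ c, c ∈ A ∧ c ∈ B) ∧ (∃ a, a ∈ A ∧ a ∉ B) ∧ (∃ b, b ∈ B ∧ b ∉ A) := by
  unfold Compatible at h
  push_neg at h
  obtain ⟨h1, h2, h3⟩ := h
  refine ⟨?_, ?_, ?_⟩
  · obtain ⟨c, hc⟩ := h1
    exact ⟨c, Finset.mem_inter.mp hc⟩
  · obtain ⟨a, ha⟩ := Finset.sdiff_nonempty.mpr (fun hsub => h2 (Finset.inter_eq_left.mpr hsub))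
    exact ⟨a, Finset.mem_sdiff.mp ha⟩
  · obtain ⟨b, hb⟩ := Finset.sdiff_nonempty.mpr (fun hsub => h3 (Finset.inter_eq_right.mpr hsub))
    exact ⟨b, Finset.mem_sdiff.mp hb⟩

/-- Core combinatorial lemma: a set compatible with both `A` and `B`, with `A ∦ B`,
is compatible with `A ∩ B`, `A ∪ B`, `A \ B` and the symmetric difference. -/
lemma compat_ops {D A B : Finset α} (hDA : Compatible D A) (hDB : Compatible D B)
    (hAB : ¬Compatible A B) :
    Compatible D (A ∩ B) ∧ Compatible D (A ∪ B) ∧ Compatible D (A \ B) ∧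
      Compatible D ((A ∪ B) \ (A ∩ B)) := by
  obtain ⟨⟨c, hcA, hcB⟩, ⟨a, haA, haB⟩, ⟨b, hbB, hbA⟩⟩ := not_compat_witness hAB
  rcases compat_iff.mp hDA with h1 | h1 | h1 <;> rcases compat_iff.mp hDB with h2 | h2 | h2
  · -- D disjoint from A and B
    refine ⟨compat_of_disj ?_, compat_of_disj ?_, compat_of_disj ?_, compat_of_disj ?_⟩ <;>
      intro x hx hx' <;> simp only [Finset.mem_inter, Finset.mem_union, Finset.mem_sdiff] at hx' <;>
      first
      | exact h1 x hx hx'.1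
      | (rcases hx'.1 with h | h; exact h1 x hx h; exact h2 x hx h)
      | (rcases hx' with h | h; exact h1 x hx h; exact h2 x hx h)
  · -- D disjoint A, B ⊆ D : impossible
    exact absurd hcA (h1 c (h2 hcB))
  · -- D disjoint A, D ⊆ B
    refine ⟨compat_of_disj ?_, compat_of_sub ?_, compat_of_disj ?_, compat_of_sub ?_⟩
    · intro x hx hx'; exact h1 x hx (Finset.mem_inter.mp hx').1
    · exact fun x hx => Finset.mem_union.mpr (Or.inr (h2 hx))
    · intro x hx hx'; exact h1 x hx (Finset.mem_sdiff.mp hx').1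
    · intro x hx
      refine Finset.mem_sdiff.mpr ⟨Finset.mem_union.mpr (Or.inr (h2 hx)), ?_⟩
      intro hx'; exact h1 x hx (Finset.mem_inter.mp hx').1
  · -- A ⊆ D, D disjoint B : impossible
    exact absurd hcB (h2 c (h1 hcA))
  · -- A ⊆ D, B ⊆ D
    refine ⟨compat_of_sup ?_, compat_of_sup ?_, compat_of_sup ?_, compat_of_sup ?_⟩
    · exact fun x hx => h1 (Finset.mem_inter.mp hx).1
    · intro x hx; rcases Finset.mem_union.mp hx with h | h; exact h1 h; exact h2 h
    · exact fun x hx => h1 (Finset.mem_sdiff.mp hx).1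
    · intro x hx
      rcases Finset.mem_union.mp (Finset.mem_sdiff.mp hx).1 with h | h
      exact h1 h; exact h2 h
  · -- A ⊆ D ⊆ B : then A ⊆ B, impossible
    exact absurd (h2 (h1 haA)) haB
  · -- D ⊆ A, D disjoint B
    refine ⟨compat_of_disj ?_, compat_of_sub ?_, compat_of_sub ?_, compat_of_sub ?_⟩
    · intro x hx hx'; exact h2 x hx (Finset.mem_inter.mp hx').2
    · exact fun x hx => Finset.mem_union.mpr (Or.inl (h1 hx))
    · exact fun x hx => Finset.mem_sdiff.mpr ⟨h1 hx, h2 x hx⟩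
    · intro x hx
      refine Finset.mem_sdiff.mpr ⟨Finset.mem_union.mpr (Or.inl (h1 hx)), ?_⟩
      intro hx'; exact h2 x hx (Finset.mem_inter.mp hx').2
  · -- D ⊆ A, B ⊆ D : then B ⊆ A, impossible
    exact absurd (h1 (h2 hbB)) hbA
  · -- D ⊆ A, D ⊆ B
    refine ⟨compat_of_sub ?_, compat_of_sub ?_, compat_of_disj ?_, compat_of_disj ?_⟩
    · exact fun x hx => Finset.mem_inter.mpr ⟨h1 hx, h2 hx⟩
    · exact fun x hx => Finset.mem_union.mpr (Or.inl (h1 hx))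
    · intro x hx hx'; exact (Finset.mem_sdiff.mp hx').2 (h2 hx)
    · intro x hx hx'
      exact (Finset.mem_sdiff.mp hx').2 (Finset.mem_inter.mpr ⟨h1 hx, h2 hx⟩)

end Aux

section AuxFin

variable {α : Type*} [Fintype α] [DecidableEq α]

set_option linter.unusedSectionVars false

lemma triv_subset_adj (hcard : 2 ≤ Fintype.card α) (C : Set (Finset α)) :
    CtrivS α ⊆ adjS C := by
  have hne : Nonempty α := Fintype.card_pos_iff.mp (by omega)
  rintro A (⟨x, rfl⟩ | rfl)
  · refine ⟨Finset.singleton_nonempty x, fun B _ => ?_⟩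
    by_cases h : x ∈ B
    · exact compat_of_sub (Finset.singleton_subset_iff.mpr h)
    · exact compat_of_disj (by intro y hy; rw [Finset.mem_singleton] at hy; subst hy; exact h)
  · exact ⟨Finset.univ_nonempty, fun B _ => compat_of_sup (Finset.subset_univ B)⟩

/-- The adjoint of any cluster system is a saturated patchwork. -/

lemma satPW_adj (C : Set (Finset α)) : IsSatPW (adjS C) := by
  intro A hA B hB hAB
  obtain ⟨⟨c, hcA, hcB⟩, ⟨a, haA, haB⟩, ⟨b, hbB, hbA⟩⟩ := not_compat_witness hAB
  obtain ⟨hAne, hAcomp⟩ := hA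
  obtain ⟨hBne, hBcomp⟩ := hB
  have key : ∀ D ∈ C, Compatible D (A ∩ B) ∧ Compatible D (A ∪ B) ∧ Compatible D (A \ B) ∧
      Compatible D ((A ∪ B) \ (A ∩ B)) := fun D hD =>
    compat_ops (compat_symm (hAcomp D hD)) (compat_symm (hBcomp D hD)) hAB
  have key' : ∀ D ∈ C, Compatible D (B \ A) := fun D hD =>
    (compat_ops (compat_symm (hBcomp D hD)) (compat_symm (hAcomp D hD))
      (fun h => hAB (compat_symm h))).2.2.1
  refine ⟨⟨⟨c, Finset.mem_inter.mpr ⟨hcA, hcB⟩⟩, fun D hD => compat_symm (key D hD).1⟩,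
    ⟨⟨c, Finset.mem_union.mpr (Or.inl hcA)⟩, fun D hD => compat_symm (key D hD).2.1⟩,
    ⟨⟨a, Finset.mem_sdiff.mpr ⟨haA, haB⟩⟩, fun D hD => compat_symm (key D hD).2.2.1⟩,
    ⟨⟨b, Finset.mem_sdiff.mpr ⟨hbB, hbA⟩⟩, fun D hD => compat_symm (key' D hD)⟩,
    ⟨⟨a, Finset.mem_sdiff.mpr ⟨Finset.mem_union.mpr (Or.inl haA),
        fun h => haB (Finset.mem_inter.mp h).2⟩⟩,
      fun D hD => compat_symm (key D hD).2.2.2⟩⟩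

/-- Key lemma: if `𝒟` is ample and contains the trivial system, there cannot exist
two incompatible sets each compatible with every member of `𝒟`. -/
lemma finite_exists_minimal_wrt_old {β : Type*} (f : Finset α → β) [PartialOrder β]
    (s : Set (Finset α)) (h : s.Finite) (hs : s.Nonempty) :
    ∃ a ∈ s, ∀ a' ∈ s, f a' ≤ f a → f a = f a' := by
  obtain ⟨a, ha, hmin⟩ := (h.image f).exists_minimal (hs.image f)
  obtain ⟨b, hb, rfl⟩ := ha
  exact ⟨b, hb, fun a' ha' hle => le_antisymm (hmin ⟨a', ha', rfl⟩ hle) hle⟩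

lemma finite_exists_maximal_wrt_old {β : Type*} (f : Finset α → β) [PartialOrder β]
    (s : Set (Finset α)) (h : s.Finite) (hs : s.Nonempty) :
    ∃ a ∈ s, ∀ a' ∈ s, f a ≤ f a' → f a = f a' := by
  obtain ⟨a, ha, hmax⟩ := (h.image f).exists_maximal (hs.image f)
  obtain ⟨b, hb, rfl⟩ := ha
  exact ⟨b, hb, fun a' ha' hle => le_antisymm hle (hmax ⟨a', ha', rfl⟩ hle)⟩

lemma keyL (𝒟 : Set (Finset α)) (hample : IsAmpleS 𝒟) (htriv : CtrivS α ⊆ 𝒟)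
    (A B : Finset α) (hcomp : ∀ D ∈ 𝒟, Compatible D A ∧ Compatible D B)
    (hAB : ¬Compatible A B) : False := by
  obtain ⟨⟨c, hcA, hcB⟩, ⟨a, haA, haB⟩, ⟨b, hbB, hbA⟩⟩ := not_compat_witness hAB
  -- any member of 𝒟 containing a and c contains A
  have claimA : ∀ D ∈ 𝒟, a ∈ D → c ∈ D → A ⊆ D := by
    intro D hD haD hcD
    rcases compat_iff.mp (hcomp D hD).1 with h | h | h
    · exact absurd haA (h a haD)
    · exact h
    · rcases compat_iff.mp (hcomp D hD).2 with h2 | h2 | h2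
      · exact absurd hcB (h2 c hcD)
      · exact absurd (h (h2 hbB)) hbA
      · exact absurd (h2 haD) haB
  have claimB : ∀ D ∈ 𝒟, b ∈ D → c ∈ D → B ⊆ D := by
    intro D hD hbD hcD
    rcases compat_iff.mp (hcomp D hD).2 with h | h | h
    · exact absurd hbB (h b hbD)
    · exact h
    · rcases compat_iff.mp (hcomp D hD).1 with h2 | h2 | h2
      · exact absurd hcA (h2 c hcD)
      · exact absurd (h (h2 haA)) haB
      · exact absurd (h2 hbD) hbA
  have claimAB : ∀ D ∈ 𝒟, a ∈ D → b ∈ D → A ⊆ D ∧ B ⊆ D := by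
    intro D hD haD hbD
    have hAD : A ⊆ D := by
      rcases compat_iff.mp (hcomp D hD).1 with h | h | h
      · exact absurd haA (h a haD)
      · exact h
      · exact absurd (h hbD) hbA
    exact ⟨hAD, claimB D hD hbD (hAD hcA)⟩
  have huniv : (Finset.univ : Finset α) ∈ 𝒟 := htriv (Or.inr rfl)
  -- minimal member containing a and b
  set S₁ : Set (Finset α) := {D ∈ 𝒟 | a ∈ D ∧ b ∈ D} with hS₁
  obtain ⟨C₁, hC₁S, hC₁min⟩ := finite_exists_minimal_wrt_old id S₁ (Set.toFinite S₁)
    ⟨Finset.univ, huniv, Finset.mem_univ a, Finset.mem_univ b⟩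
  obtain ⟨hC₁D, haC₁, hbC₁⟩ := hC₁S
  have hsubs := claimAB C₁ hC₁D haC₁ hbC₁
  have hcC₁ : c ∈ C₁ := hsubs.1 hcA
  -- maximal member strictly below C₁ containing c
  set S₂ : Set (Finset α) := {D ∈ 𝒟 | c ∈ D ∧ D ⊂ C₁} with hS₂
  have hsingle : ({c} : Finset α) ∈ S₂ := by
    refine ⟨htriv (Or.inl ⟨c, rfl⟩), Finset.mem_singleton_self c, ?_⟩
    constructor
    · exact Finset.singleton_subset_iff.mpr hcC₁
    · intro hsub
      have : a ∈ ({c} : Finset α) := hsub haC₁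
      rw [Finset.mem_singleton] at this
      subst this
      exact haB hcB
  obtain ⟨C₂, hC₂S, hC₂max⟩ := finite_exists_maximal_wrt_old id S₂ (Set.toFinite S₂) ⟨_, hsingle⟩
  obtain ⟨hC₂D, hcC₂, hC₂lt⟩ := hC₂S
  -- a ∉ C₂
  have haC₂ : a ∉ C₂ := by
    intro haC₂
    have hAC₂ : A ⊆ C₂ := claimA C₂ hC₂D haC₂ hcC₂
    have hBC₂ : B ⊆ C₂ := by
      rcases compat_iff.mp (hcomp C₂ hC₂D).2 with h | h | h
      · exact absurd hcB (h c hcC₂)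
      · exact h
      · exact absurd (h haC₂) haB
    have : C₂ ∈ S₁ := ⟨hC₂D, haC₂, hBC₂ hbB⟩
    have := hC₁min C₂ this (le_of_lt hC₂lt)
    exact absurd (id this : C₁ = C₂) (ne_of_gt hC₂lt)
  have hbC₂ : b ∉ C₂ := by
    intro hbC₂
    have hBC₂ : B ⊆ C₂ := claimB C₂ hC₂D hbC₂ hcC₂
    have hAC₂ : A ⊆ C₂ := by
      rcases compat_iff.mp (hcomp C₂ hC₂D).1 with h | h | h
      · exact absurd hcA (h c hcC₂)
      · exact h
      · exact absurd (h hbC₂) hbA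
    have : C₂ ∈ S₁ := ⟨hC₂D, hAC₂ haA, hbC₂⟩
    have := hC₁min C₂ this (le_of_lt hC₂lt)
    exact absurd (id this : C₁ = C₂) (ne_of_gt hC₂lt)
  -- Hasse arc
  have harc : ∀ E ∈ 𝒟, ¬(C₂ ⊂ E ∧ E ⊂ C₁) := by
    rintro E hE ⟨h1, h2⟩
    have : E ∈ S₂ := ⟨hE, h1.subset hcC₂, h2⟩
    have := hC₂max E this (le_of_lt h1)
    exact absurd (id this : C₂ = E) (ne_of_lt h1)
  have hD0 : C₁ \ C₂ ∈ 𝒟 := hample C₁ hC₁D C₂ hC₂D hC₂lt harc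
  have haD0 : a ∈ C₁ \ C₂ := Finset.mem_sdiff.mpr ⟨haC₁, haC₂⟩
  have hbD0 : b ∈ C₁ \ C₂ := Finset.mem_sdiff.mpr ⟨hbC₁, hbC₂⟩
  have hcD0 : c ∈ C₁ \ C₂ := (claimAB _ hD0 haD0 hbD0).1 hcA
  exact (Finset.mem_sdiff.mp hcD0).2 hcC₂

/-- A hierarchy's adjoint is ample. -/

lemma hier_adj_ample (C : Set (Finset α)) (hH : IsHierarchyS C) : IsAmpleS (adjS C) := by
  intro C₁ hC₁ C₂ hC₂ hlt harc
  obtain ⟨hC₁ne, hC₁comp⟩ := hC₁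
  obtain ⟨hC₂ne, hC₂comp⟩ := hC₂
  have hne : (C₁ \ C₂).Nonempty := Finset.sdiff_nonempty.mpr (fun h => hlt.not_subset h)
  refine ⟨hne, fun A hA => ?_⟩
  by_contra hnc
  obtain ⟨⟨x, hx1, hx2⟩, ⟨d, hd1, hd2⟩, ⟨a', ha1, ha2⟩⟩ := not_compat_witness hnc
  have hxC₁ : x ∈ C₁ := (Finset.mem_sdiff.mp hx1).1
  have hxC₂ : x ∉ C₂ := (Finset.mem_sdiff.mp hx1).2
  have hdC₁ : d ∈ C₁ := (Finset.mem_sdiff.mp hd1).1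
  -- A ⊆ C₁
  have hAC₁ : A ⊆ C₁ := by
    rcases compat_iff.mp (hC₁comp A hA) with h | h | h
    · exact absurd hx2 (h x hxC₁)
    · exact h
    · exact absurd (h hdC₁) hd2
  -- a' ∈ C₂
  have ha'C₂ : a' ∈ C₂ := by
    by_contra h
    exact ha2 (Finset.mem_sdiff.mpr ⟨hAC₁ ha1, h⟩)
  -- C₂ ⊆ A
  have hC₂A : C₂ ⊆ A := by
    rcases compat_iff.mp (hC₂comp A hA) with h | h | h
    · exact absurd ha1 (h a' ha'C₂)
    · exact absurd (h hx2) hxC₂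
    · exact h
  have hAadj : A ∈ adjS C := ⟨hH.1 A hA, fun B hB => hH.2 A hA B hB⟩
  refine harc A hAadj ⟨⟨hC₂A, fun h => hxC₂ (h hx2)⟩, ⟨hAC₁, fun h => hd2 (h hdC₁)⟩⟩

end AuxFin


/-- A cluster system `C` is a hierarchy iff its adjoint `C*` is ample (in which case
`C*` is an ample saturated patchwork containing `C_triv`); conversely, the adjoint of
any ample weak patchwork containing `C_triv` is a hierarchy, and its double adjoint is
an ample saturated patchwork containing `C_triv`. -/
theorem stmt10 {α : Type*} [Fintype α] [DecidableEq α] (hcard : 2 ≤ Fintype.card α)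
    (C : Set (Finset α)) (hC : IsCS C) :
    (IsHierarchyS C ↔ IsAmpleS (adjS C)) ∧
    (IsHierarchyS C →
      IsAmpleS (adjS C) ∧ IsSatPW (adjS C) ∧ CtrivS α ⊆ adjS C) ∧
    ((IsWeakPW C ∧ IsAmpleS C ∧ CtrivS α ⊆ C) →
      IsHierarchyS (adjS C) ∧ IsAmpleS (adjS (adjS C)) ∧ IsSatPW (adjS (adjS C)) ∧
        CtrivS α ⊆ adjS (adjS C)) := by
  have htriv := triv_subset_adj (C := C) hcard
  refine ⟨⟨hier_adj_ample C, ?_⟩, fun hH => ⟨hier_adj_ample C hH, satPW_adj C, htriv⟩, ?_⟩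
  · -- adjS C ample → C hierarchy
    intro hample
    refine ⟨hC, fun A hA B hB => ?_⟩
    by_contra hAB
    exact keyL (adjS C) hample htriv A B
      (fun D hD => ⟨hD.2 A hA, hD.2 B hB⟩) hAB
  · rintro ⟨_, hample, htrivC⟩
    have hHadj : IsHierarchyS (adjS C) := by
      refine ⟨fun A hA => hA.1, fun A hA B hB => ?_⟩
      by_contra hAB
      exact keyL C hample htrivC A B
        (fun D hD => ⟨compat_symm (hA.2 D hD), compat_symm (hB.2 D hD)⟩) hAB
    exact ⟨hHadj, hier_adj_ample (adjS C) hHadj, satPW_adj (adjS C),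
      triv_subset_adj hcard (adjS C)⟩
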